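/- arXiv:2206.08996 — 2 statements merged into one kernel-verified Lean document; each statement's English description precedes it below -/
import Mathlib

section
/- Fix innate opinions s ∈ ℝⁿ. Let K_n be the complete graph on n vertices with all edge weights equal to w̄, whose Laplacian is L_{K_n} = w̄·(n·I − 1·1ᵀ), and let z_{K_n} = (I + L_{K_n})^{-1}·s. Then for every weighted undirected graph G on n vertices with maximal edge weight w̄ and expressed opinions z_G = (I + L_G)^{-1}·s, we have P(z_{K_n}) ≤ P(z_G); moreover P(z_{K_n}) = P(s)/(1 + w̄·n)². -/
open Matrix Finset

noncomputable def deg {n : ℕ} (W : Matrix (Fin n) (Fin n) ℝ) (i : Fin n) : ℝ := ∑ j, W i j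

noncomputable def lap {n : ℕ} (W : Matrix (Fin n) (Fin n) ℝ) : Matrix (Fin n) (Fin n) ℝ :=
  Matrix.diagonal (deg W) - W

noncomputable def mean {n : ℕ} (x : Fin n → ℝ) : ℝ := (∑ i, x i) / n

noncomputable def ctr {n : ℕ} (x : Fin n → ℝ) : Fin n → ℝ := fun i => x i - mean x

noncomputable def pol {n : ℕ} (x : Fin n → ℝ) : ℝ := ∑ i, (x i - mean x) ^ 2

def vij {n : ℕ} (i j : Fin n) : Fin n → ℝ :=
  fun k => (if k = i then (1 : ℝ) else 0) - (if k = j then (1 : ℝ) else 0)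

namespace Stmt1Aux

variable {n : ℕ}

lemma lap_mulVec (W : Matrix (Fin n) (Fin n) ℝ) (x : Fin n → ℝ) (i : Fin n) :
    (lap W *ᵥ x) i = ∑ j, W i j * (x i - x j) := by
  rw [lap, sub_mulVec]
  have h1 : (Matrix.diagonal (deg W) *ᵥ x) i = deg W i * x i := mulVec_diagonal ..
  have h2 : (W *ᵥ x) i = ∑ j, W i j * x j := rfl
  rw [Pi.sub_apply, h1, h2, deg, Finset.sum_mul, ← Finset.sum_sub_distrib]
  exact Finset.sum_congr rfl fun j _ => by ring

lemma dot_lap (W : Matrix (Fin n) (Fin n) ℝ) (x : Fin n → ℝ) :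
    x ⬝ᵥ (lap W *ᵥ x) = ∑ i, ∑ j, W i j * (x i * x i - x i * x j) := by
  simp only [dotProduct, lap_mulVec]
  refine Finset.sum_congr rfl fun i _ => ?_
  rw [Finset.mul_sum]
  exact Finset.sum_congr rfl fun j _ => by ring

lemma two_dot_lap (W : Matrix (Fin n) (Fin n) ℝ) (hsymm : W.IsSymm) (x : Fin n → ℝ) :
    2 * (x ⬝ᵥ (lap W *ᵥ x)) = ∑ i, ∑ j, W i j * (x i - x j) ^ 2 := by
  have hsw : ∀ i j, W j i = W i j := fun i j => hsymm.apply i j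
  rw [dot_lap]
  have h2 : ∑ i, ∑ j, W i j * (x i * x i - x i * x j)
      = ∑ i, ∑ j, W i j * (x j * x j - x i * x j) := by
    rw [Finset.sum_comm]
    exact Finset.sum_congr rfl fun i _ => Finset.sum_congr rfl fun j _ => by
      rw [hsw i j]; ring
  rw [two_mul]
  nth_rewrite 2 [h2]
  rw [← Finset.sum_add_distrib]
  refine Finset.sum_congr rfl fun i _ => ?_
  rw [← Finset.sum_add_distrib]
  exact Finset.sum_congr rfl fun j _ => by ring

lemma dot_lap_nonneg (W : Matrix (Fin n) (Fin n) ℝ) (hsymm : W.IsSymm)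
    (hnn : ∀ i j, 0 ≤ W i j) (x : Fin n → ℝ) :
    0 ≤ x ⬝ᵥ (lap W *ᵥ x) := by
  have h := two_dot_lap W hsymm x
  have hpos : 0 ≤ ∑ i, ∑ j, W i j * (x i - x j) ^ 2 :=
    Finset.sum_nonneg fun i _ => Finset.sum_nonneg fun j _ =>
      mul_nonneg (hnn i j) (sq_nonneg _)
  linarith

lemma lap_isSymm (W : Matrix (Fin n) (Fin n) ℝ) (hsymm : W.IsSymm) :
    (lap W).IsSymm := by
  unfold Matrix.IsSymm
  ext i j
  simp only [transpose_apply, lap, Matrix.sub_apply]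
  rw [hsymm.apply i j]
  rcases eq_or_ne i j with h | h
  · subst h; rfl
  · rw [diagonal_apply_ne _ h, diagonal_apply_ne _ (Ne.symm h)]

lemma lap_isHermitian (W : Matrix (Fin n) (Fin n) ℝ) (hsymm : W.IsSymm) :
    (lap W).IsHermitian := by
  rw [Matrix.IsHermitian, conjTranspose_eq_transpose_of_trivial]
  exact lap_isSymm W hsymm

lemma lap_posSemidef (W : Matrix (Fin n) (Fin n) ℝ) (hsymm : W.IsSymm)
    (hnn : ∀ i j, 0 ≤ W i j) : (lap W).PosSemidef := by
  refine Matrix.PosSemidef.of_dotProduct_mulVec_nonneg (lap_isHermitian W hsymm) fun x => ?_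
  simpa using dot_lap_nonneg W hsymm hnn x

lemma lap_rowsum (W : Matrix (Fin n) (Fin n) ℝ) (i : Fin n) :
    ∑ j, lap W i j = 0 := by
  simp only [lap, Matrix.sub_apply, Finset.sum_sub_distrib]
  rw [Finset.sum_eq_single i (fun b _ hb => diagonal_apply_ne' _ hb) (by simp)]
  simp [deg]

lemma sum_lap_mulVec (W : Matrix (Fin n) (Fin n) ℝ) (hsymm : W.IsSymm) (x : Fin n → ℝ) :
    ∑ i, (lap W *ᵥ x) i = 0 := by
  have hcol : ∀ j, ∑ i, lap W i j = 0 := by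
    intro j
    have := lap_rowsum W j
    calc ∑ i, lap W i j = ∑ i, lap W j i :=
          Finset.sum_congr rfl fun i _ => (lap_isSymm W hsymm).apply j i
      _ = 0 := lap_rowsum W j
  calc ∑ i, (lap W *ᵥ x) i = ∑ i, ∑ j, lap W i j * x j := rfl
    _ = ∑ j, (∑ i, lap W i j) * x j := by
        rw [Finset.sum_comm]
        exact Finset.sum_congr rfl fun j _ => (Finset.sum_mul ..).symm
    _ = 0 := by simp [hcol]

lemma lap_mulVec_const (W : Matrix (Fin n) (Fin n) ℝ) (c : ℝ) :
    lap W *ᵥ (fun _ => c) = 0 := by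
  funext i
  rw [lap_mulVec]
  simp


lemma posSemidef_add {A B : Matrix (Fin n) (Fin n) ℝ} (hA : A.PosSemidef) (hB : B.PosSemidef) :
    (A + B).PosSemidef := by
  refine Matrix.PosSemidef.of_dotProduct_mulVec_nonneg (hA.1.add hB.1) fun x => ?_
  have h1 := hA.dotProduct_mulVec_nonneg x
  have h2 := hB.dotProduct_mulVec_nonneg x
  rw [Matrix.add_mulVec, dotProduct_add]
  exact add_nonneg h1 h2

lemma posDef_one_add {A : Matrix (Fin n) (Fin n) ℝ} (hA : A.PosSemidef) :
    ((1 : Matrix (Fin n) (Fin n) ℝ) + A).PosDef := by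
  refine Matrix.posDef_iff_dotProduct_mulVec.mpr ⟨Matrix.isHermitian_one.add hA.1, fun x hx => ?_⟩
  have h1 : 0 < x ⬝ᵥ x := by
    have hnn : 0 ≤ x ⬝ᵥ x := Finset.sum_nonneg fun i _ => mul_self_nonneg _
    have hne : x ⬝ᵥ x ≠ 0 := fun h => hx (dotProduct_self_eq_zero.mp h)
    exact hnn.lt_of_ne (Ne.symm hne)
  have h2 := hA.dotProduct_mulVec_nonneg x
  rw [Matrix.add_mulVec, Matrix.one_mulVec, dotProduct_add]
  simp only [star_trivial] at *
  linarith

lemma mulVec_inv_cancel {A : Matrix (Fin n) (Fin n) ℝ} (hA : A.PosDef) (v : Fin n → ℝ) :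
    A *ᵥ (A⁻¹ *ᵥ v) = v := by
  rw [Matrix.mulVec_mulVec, Matrix.mul_nonsing_inv _ hA.det_pos.ne'.isUnit, Matrix.one_mulVec]

lemma conj_helper (R L : Matrix (Fin n) (Fin n) ℝ) (c : ℝ)
    (hRR : R * R = L) (hRh : Rᴴ = R) :
    R * (c • (1 : Matrix (Fin n) (Fin n) ℝ) - L) * Rᴴ
      = (c • (1 : Matrix (Fin n) (Fin n) ℝ) - L) * L := by
  subst hRR
  rw [hRh]
  simp only [Matrix.mul_sub, Matrix.sub_mul, Matrix.mul_smul, Matrix.smul_mul, mul_one, one_mul,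
    Matrix.mul_assoc]

lemma lap_sub (A B : Matrix (Fin n) (Fin n) ℝ) : lap (A - B) = lap A - lap B := by
  unfold lap
  have hdeg : deg (A - B) = fun i => deg A i - deg B i := by
    funext i; simp [deg, Finset.sum_sub_distrib]
  rw [hdeg, ← Matrix.diagonal_sub]
  abel

open scoped MatrixOrder in
lemma exists_sqrt {A : Matrix (Fin n) (Fin n) ℝ} (hA : A.PosSemidef) :
    ∃ R : Matrix (Fin n) (Fin n) ℝ, R * R = A ∧ Rᴴ = R :=
  ⟨CFC.sqrt A, CFC.sqrt_mul_sqrt_self A hA.nonneg, (CFC.sqrt_nonneg A).posSemidef.1⟩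

end Stmt1Aux

set_option maxHeartbeats 1600000 in
/-- Corollary 1: the complete graph with all edge weights equal to `wbar`
globally minimizes expressed polarization, and its polarization equals
`P(s) / (1 + wbar * n)^2`. -/
theorem stmt_1 {n : ℕ} (hn : 2 ≤ n) (wbar : ℝ) (hwbar : 0 < wbar)
    (s : Fin n → ℝ)
    (LK : Matrix (Fin n) (Fin n) ℝ)
    (hLK : LK = wbar • ((n : ℝ) • (1 : Matrix (Fin n) (Fin n) ℝ) -
      Matrix.of fun _ _ => (1 : ℝ)))
    (zK : Fin n → ℝ) (hzK : zK = (1 + LK)⁻¹ *ᵥ s)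
    (W : Matrix (Fin n) (Fin n) ℝ)
    (hsymm : W.IsSymm) (hdiag : ∀ i, W i i = 0)
    (hW : ∀ i j, 0 ≤ W i j ∧ W i j ≤ wbar)
    (zG : Fin n → ℝ) (hzG : zG = (1 + lap W)⁻¹ *ᵥ s) :
    pol zK ≤ pol zG ∧ pol zK = pol s / (1 + wbar * n) ^ 2 := by
  classical
  have hn0 : (0:ℝ) < n := by
    have : 0 < n := by omega
    exact_mod_cast this
  set c : ℝ := wbar * n with hc
  have hc0 : 0 < c := mul_pos hwbar hn0
  -- complete graph weight matrix
  set WK : Matrix (Fin n) (Fin n) ℝ := Matrix.of (fun i j => if i = j then 0 else wbar)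
    with hWKdef
  have hWKsymm : WK.IsSymm := by
    unfold Matrix.IsSymm; ext i j
    simp only [transpose_apply, hWKdef, Matrix.of_apply, eq_comm]
  have hWKnn : ∀ i j, 0 ≤ WK i j := by
    intro i j; simp only [hWKdef, Matrix.of_apply]
    split <;> [rfl; exact hwbar.le]
  have hdegK : ∀ i, deg WK i = c - wbar := by
    intro i
    simp only [deg, hWKdef, Matrix.of_apply]
    have h1 : ∀ x : Fin n, (if i = x then (0:ℝ) else wbar)
        = wbar - (if i = x then wbar else 0) := by
      intro x; split <;> ring
    rw [Finset.sum_congr rfl fun x _ => h1 x, Finset.sum_sub_distrib, Finset.sum_const,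
      Finset.card_univ, Fintype.card_fin, nsmul_eq_mul, Finset.sum_ite_eq]
    simp [hc, mul_comm]
  have hLKlap : LK = lap WK := by
    ext i j
    rw [hLK]
    simp only [lap, Matrix.sub_apply, Matrix.smul_apply, Matrix.of_apply, smul_eq_mul]
    rcases eq_or_ne i j with h | h
    · subst h
      rw [Matrix.diagonal_apply_eq, hdegK, Matrix.one_apply_eq, hWKdef]
      simp [hc]; ring
    · rw [Matrix.diagonal_apply_ne _ h, Matrix.one_apply_ne h, hWKdef]
      simp [h]
  have hLKpsd : (lap WK).PosSemidef := Stmt1Aux.lap_posSemidef WK hWKsymm hWKnn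
  have hKpd : (1 + LK).PosDef := by rw [hLKlap]; exact Stmt1Aux.posDef_one_add hLKpsd
  have hsK : (1 + LK) *ᵥ zK = s := by rw [hzK]; exact Stmt1Aux.mulVec_inv_cancel hKpd s
  -- explicit form of the complete-graph dynamics
  have hLKv : ∀ (x : Fin n → ℝ) (i : Fin n), (LK *ᵥ x) i = c * x i - wbar * ∑ j, x j := by
    intro x i
    rw [hLKlap, Stmt1Aux.lap_mulVec]
    have h1 : ∀ j, WK i j * (x i - x j) = wbar * (x i - x j) := by
      intro j
      rcases eq_or_ne i j with h | h
      · subst h; simp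
      · simp [hWKdef, h]
    calc ∑ j, WK i j * (x i - x j) = ∑ j, wbar * (x i - x j) :=
          Finset.sum_congr rfl fun j _ => h1 j
      _ = wbar * ∑ j, (x i - x j) := (Finset.mul_sum ..).symm
      _ = wbar * ((n : ℝ) * x i - ∑ j, x j) := by
          rw [Finset.sum_sub_distrib, Finset.sum_const, Finset.card_univ, Fintype.card_fin,
            nsmul_eq_mul]
      _ = c * x i - wbar * ∑ j, x j := by rw [hc]; ring
  have hsKi : ∀ i, s i = (1 + c) * zK i - wbar * ∑ j, zK j := by
    intro i
    have h := congrFun hsK i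
    rw [Matrix.add_mulVec, Matrix.one_mulVec] at h
    have h2 : zK i + (LK *ᵥ zK) i = s i := h
    rw [hLKv zK i] at h2
    linarith
  have hsumK : ∑ i, s i = ∑ i, zK i := by
    rw [Finset.sum_congr rfl fun i _ => hsKi i]
    rw [Finset.sum_sub_distrib, ← Finset.mul_sum, Finset.sum_const, Finset.card_univ,
      Fintype.card_fin, nsmul_eq_mul, hc]
    ring
  have hmeanK : mean s = mean zK := by unfold mean; rw [hsumK]
  have hctrK : ∀ i, s i - mean s = (1 + c) * (zK i - mean zK) := by
    intro i
    rw [hmeanK, hsKi i]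
    have hT : ∑ j, zK j = (n : ℝ) * mean zK := by
      unfold mean; field_simp
    rw [hT, hc]; ring
  have hpolK : pol s = (1 + c) ^ 2 * pol zK := by
    unfold pol
    rw [Finset.mul_sum]
    refine Finset.sum_congr rfl fun i _ => ?_
    rw [hctrK i]; ring
  have h1c : (0:ℝ) < 1 + c := by linarith
  have part2 : pol zK = pol s / (1 + c) ^ 2 := by
    rw [hpolK]; field_simp
  -- general graph
  have hLpsd : (lap W).PosSemidef :=
    Stmt1Aux.lap_posSemidef W hsymm (fun i j => (hW i j).1)
  have hGpd : (1 + lap W).PosDef := Stmt1Aux.posDef_one_add hLpsd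
  have hsG : (1 + lap W) *ᵥ zG = s := by rw [hzG]; exact Stmt1Aux.mulVec_inv_cancel hGpd s
  set y : Fin n → ℝ := fun i => zG i - mean zG with hy
  have hLy : lap W *ᵥ y = lap W *ᵥ zG := by
    have hyeq : y = zG - (fun _ => mean zG) := rfl
    rw [hyeq, Matrix.mulVec_sub, Stmt1Aux.lap_mulVec_const, sub_zero]
  set u : Fin n → ℝ := lap W *ᵥ y with hu
  have hsum0 : ∑ i, (lap W *ᵥ zG) i = 0 := Stmt1Aux.sum_lap_mulVec W hsymm zG
  have hsumG : ∑ i, s i = ∑ i, zG i := by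
    rw [← hsG]
    have : ∀ i, ((1 + lap W) *ᵥ zG) i = zG i + (lap W *ᵥ zG) i := by
      intro i; rw [Matrix.add_mulVec, Matrix.one_mulVec]; rfl
    rw [Finset.sum_congr rfl fun i _ => this i, Finset.sum_add_distrib, hsum0, add_zero]
  have hmeanG : mean s = mean zG := by unfold mean; rw [hsumG]
  have hctrS : ∀ i, s i - mean s = y i + u i := by
    intro i
    have h := congrFun hsG i
    rw [Matrix.add_mulVec, Matrix.one_mulVec] at h
    have h2 : zG i + (lap W *ᵥ zG) i = s i := h
    have h3 : u i = (lap W *ᵥ zG) i := congrFun hLy i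
    rw [hmeanG, hy, h3]
    simp only []
    linarith
  have hpolS : pol s = y ⬝ᵥ y + 2 * (y ⬝ᵥ u) + u ⬝ᵥ u := by
    unfold pol dotProduct
    rw [Finset.mul_sum, ← Finset.sum_add_distrib, ← Finset.sum_add_distrib]
    refine Finset.sum_congr rfl fun i _ => ?_
    rw [hctrS i]; ring
  have hpolG : pol zG = y ⬝ᵥ y := by
    unfold pol dotProduct
    exact Finset.sum_congr rfl fun i _ => by rw [hy]; ring
  have hq0 : 0 ≤ y ⬝ᵥ u :=
    Stmt1Aux.dot_lap_nonneg W hsymm (fun i j => (hW i j).1) y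
  have hyy0 : 0 ≤ y ⬝ᵥ y := Finset.sum_nonneg fun i _ => mul_self_nonneg _
  -- the matrix c•1 - L is PSD
  have hJpsd : ((wbar • Matrix.of fun _ _ => (1:ℝ)) : Matrix (Fin n) (Fin n) ℝ).PosSemidef := by
    refine Matrix.PosSemidef.of_dotProduct_mulVec_nonneg ?_ ?_
    · rw [Matrix.IsHermitian, Matrix.conjTranspose_eq_transpose_of_trivial]
      ext i j; simp
    · intro x
      have hxx : star x ⬝ᵥ ((wbar • Matrix.of fun _ _ => (1:ℝ)) *ᵥ x)
          = wbar * ((∑ i, x i) * (∑ i, x i)) := by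
        simp only [star_trivial, Matrix.mulVec, dotProduct, Matrix.smul_apply,
          Matrix.of_apply, smul_eq_mul, mul_one]
        rw [← Finset.mul_sum, ← Finset.sum_mul]
        ring
      rw [hxx]
      have : 0 ≤ (∑ i, x i) * (∑ i, x i) := mul_self_nonneg _
      positivity
  have hW'symm : (WK - W).IsSymm := by
    unfold Matrix.IsSymm at *
    rw [Matrix.transpose_sub, hWKsymm, hsymm]
  have hW'nn : ∀ i j, 0 ≤ (WK - W) i j := by
    intro i j
    simp only [Matrix.sub_apply, hWKdef, Matrix.of_apply]
    rcases eq_or_ne i j with h | h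
    · subst h; simp [hdiag i]
    · simp only [if_neg h, sub_nonneg]; exact (hW i j).2
  have hdecomp : c • (1 : Matrix (Fin n) (Fin n) ℝ) - lap W
      = lap (WK - W) + wbar • (Matrix.of fun _ _ => (1:ℝ)) := by
    rw [Stmt1Aux.lap_sub, ← hLKlap, hLK, smul_sub, smul_smul, ← hc]
    abel
  have hMpsd : (c • (1 : Matrix (Fin n) (Fin n) ℝ) - lap W).PosSemidef := by
    rw [hdecomp]
    exact Stmt1Aux.posSemidef_add (Stmt1Aux.lap_posSemidef _ hW'symm hW'nn) hJpsd
  have hA : y ⬝ᵥ u ≤ c * (y ⬝ᵥ y) := by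
    have h := hMpsd.dotProduct_mulVec_nonneg y
    rw [Matrix.sub_mulVec, Matrix.smul_mulVec, Matrix.one_mulVec] at h
    simp only [star_trivial, dotProduct_sub, dotProduct_smul, smul_eq_mul] at h
    rw [← hu] at h
    linarith
  have hB : u ⬝ᵥ u ≤ c * (y ⬝ᵥ u) := by
    obtain ⟨R, hRR, hRh⟩ := Stmt1Aux.exists_sqrt hLpsd
    have hP2 := hMpsd.mul_mul_conjTranspose_same R
    have hEq : R * (c • (1 : Matrix (Fin n) (Fin n) ℝ) - lap W) * Rᴴ
        = (c • (1 : Matrix (Fin n) (Fin n) ℝ) - lap W) * lap W :=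
      Stmt1Aux.conj_helper R (lap W) c hRR hRh
    rw [hEq] at hP2
    have h := hP2.dotProduct_mulVec_nonneg y
    rw [← Matrix.mulVec_mulVec, ← hu] at h
    rw [Matrix.sub_mulVec, Matrix.smul_mulVec, Matrix.one_mulVec] at h
    simp only [star_trivial, dotProduct_sub, dotProduct_smul, smul_eq_mul] at h
    have hyLu : y ⬝ᵥ (lap W *ᵥ u) = u ⬝ᵥ u := by
      rw [Matrix.dotProduct_mulVec, ← Matrix.mulVec_transpose]
      have hLs : (lap W)ᵀ = lap W := Stmt1Aux.lap_isSymm W hsymm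
      rw [hLs, ← hu]
    rw [hyLu] at h
    linarith
  have hfinal : pol s ≤ (1 + c) ^ 2 * pol zG := by
    rw [hpolS, hpolG]
    nlinarith [hA, hB, hq0, hyy0, hc0]
  refine ⟨?_, part2⟩
  rw [part2, div_le_iff₀ (by positivity)]
  calc pol s ≤ (1 + c) ^ 2 * pol zG := hfinal
    _ = pol zG * (1 + c) ^ 2 := by ring
end

section
/- Let (i,j) be a pair of distinct vertices with w_ij < w̄ and let δ ∈ (0, w̄ − w_ij]. Then the exact change in polarization from adding weight δ to edge (i,j) is P(z) − P(z⁺) = 2δ·(z̃ᵀ(I+L)^{-1}v_ij)·(v_ijᵀ z̃)/(1 + δ·v_ijᵀ(I+L)^{-1}v_ij) − δ²·(v_ijᵀ(I+L)^{-2}v_ij)·(z_i − z_j)²/(1 + δ·v_ijᵀ(I+L)^{-1}v_ij)². -/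
open Matrix Finset

/- ### auxiliary lemmas -/

lemma lap_quad {n : ℕ} (W : Matrix (Fin n) (Fin n) ℝ) (hsymm : W.IsSymm)
    (hW : ∀ i j, 0 ≤ W i j) (x : Fin n → ℝ) :
    0 ≤ x ⬝ᵥ (lap W *ᵥ x) := by
  have expand : x ⬝ᵥ (lap W *ᵥ x)
      = (∑ i, ∑ j, W i j * x i ^ 2) - ∑ i, ∑ j, W i j * (x i * x j) := by
    simp only [dotProduct, lap, mulVec]
    rw [← Finset.sum_sub_distrib]
    refine Finset.sum_congr rfl fun i _ => ?_
    have e : ∀ j, x i * ((diagonal (deg W) - W) i j * x j)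
        = (if i = j then deg W i * (x i * x j) else 0) - W i j * (x i * x j) := by
      intro j
      by_cases h : i = j <;> simp [Matrix.sub_apply, Matrix.diagonal_apply, h] <;> ring
    rw [Finset.mul_sum]
    simp only [e, Finset.sum_sub_distrib, Finset.sum_ite_eq, Finset.mem_univ, if_true]
    congr 1
    · rw [deg, Finset.sum_mul]
      exact Finset.sum_congr rfl fun j _ => by ring
  have swap : ∑ i, ∑ j, W i j * x j ^ 2 = ∑ i, ∑ j, W i j * x i ^ 2 := by
    rw [Finset.sum_comm]
    exact Finset.sum_congr rfl fun i _ => Finset.sum_congr rfl fun j _ => by rw [hsymm.apply]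
  have key : ∑ i, ∑ j, W i j * (x i - x j) ^ 2 = 2 * (x ⬝ᵥ (lap W *ᵥ x)) := by
    have e1 : ∑ i, ∑ j, W i j * (x i - x j) ^ 2
        = (∑ i, ∑ j, W i j * x i ^ 2) + (∑ i, ∑ j, W i j * x j ^ 2)
          - 2 * ∑ i, ∑ j, W i j * (x i * x j) := by
      simp only [← Finset.sum_add_distrib, ← Finset.sum_sub_distrib, Finset.mul_sum]
      refine Finset.sum_congr rfl fun i _ => Finset.sum_congr rfl fun j _ => by ring
    rw [e1, swap, expand]; ring
  have pos : 0 ≤ ∑ i, ∑ j, W i j * (x i - x j) ^ 2 :=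
    Finset.sum_nonneg fun i _ => Finset.sum_nonneg fun j _ =>
      mul_nonneg (hW i j) (sq_nonneg _)
  linarith [key ▸ pos]

lemma lap_isSymm {n : ℕ} (W : Matrix (Fin n) (Fin n) ℝ) (hsymm : W.IsSymm) :
    (lap W).IsSymm := by
  refine Matrix.IsSymm.ext fun i j => ?_
  simp only [lap, Matrix.sub_apply, Matrix.diagonal_apply, hsymm.apply i j]
  by_cases h : i = j <;> simp [h, eq_comm]

lemma posdef_one_add {n : ℕ} (M : Matrix (Fin n) (Fin n) ℝ) (hs : M.IsSymm)
    (hq : ∀ x, 0 ≤ x ⬝ᵥ (M *ᵥ x)) : (1 + M).PosDef := by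
  rw [Matrix.posDef_iff_dotProduct_mulVec]
  constructor
  · show (1 + M)ᴴ = 1 + M
    have h0 : (1 + M)ᴴ = (1 + M)ᵀ := rfl
    rw [h0, Matrix.transpose_add, Matrix.transpose_one, hs.eq]
  · intro x hx
    have h1 : star x = x := by simp
    rw [h1, Matrix.add_mulVec, Matrix.one_mulVec, dotProduct_add]
    have h2 : 0 < x ⬝ᵥ x := by
      rcases lt_or_eq_of_le (Finset.sum_nonneg fun i _ => mul_self_nonneg (x i) :
        (0:ℝ) ≤ x ⬝ᵥ x) with h | h
      · exact h
      · exact absurd (dotProduct_self_eq_zero.mp h.symm) hx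
    have := hq x
    linarith

lemma vecMulVec_mulVec' {n : ℕ} (v x : Fin n → ℝ) :
    vecMulVec v v *ᵥ x = (v ⬝ᵥ x) • v := by
  ext k
  simp only [mulVec, dotProduct, vecMulVec_apply, Pi.smul_apply, smul_eq_mul, Finset.sum_mul]
  exact Finset.sum_congr rfl fun l _ => by ring

lemma vecMulVec_sandwich {n : ℕ} (v : Fin n → ℝ) (M : Matrix (Fin n) (Fin n) ℝ) :
    vecMulVec v v * M * vecMulVec v v = (v ⬝ᵥ (M *ᵥ v)) • vecMulVec v v := by
  ext k l
  simp only [Matrix.mul_apply, vecMulVec_apply, Matrix.smul_apply, smul_eq_mul,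
    dotProduct, mulVec, Finset.sum_mul, Finset.mul_sum]
  rw [Finset.sum_comm]
  refine Finset.sum_congr rfl fun p _ => Finset.sum_congr rfl fun q _ => by ring

lemma sum_vij {n : ℕ} (i j : Fin n) : ∑ k, vij i j k = 0 := by
  simp [vij, Finset.sum_sub_distrib]

lemma dot_vij {n : ℕ} (i j : Fin n) (hij : i ≠ j) (x : Fin n → ℝ) :
    vij i j ⬝ᵥ x = x i - x j := by
  simp [vij, dotProduct, sub_mul, Finset.sum_sub_distrib, ite_mul]

/-- Lemma 1: exact change in polarization from adding weight `δ`
to the edge `(i,j)`. -/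
theorem stmt_2 {n : ℕ} (hn : 2 ≤ n) (wbar : ℝ) (hwbar : 0 < wbar)
    (W : Matrix (Fin n) (Fin n) ℝ)
    (hsymm : W.IsSymm) (hdiag : ∀ i, W i i = 0)
    (hW : ∀ i j, 0 ≤ W i j ∧ W i j ≤ wbar)
    (s : Fin n → ℝ) (i j : Fin n) (hij : i ≠ j)
    (hwij : W i j < wbar)
    (δ : ℝ) (hδ0 : 0 < δ) (hδ : δ ≤ wbar - W i j)
    (z zp : Fin n → ℝ)
    (hz : z = (1 + lap W)⁻¹ *ᵥ s)
    (hzp : zp = (1 + (lap W + δ • vecMulVec (vij i j) (vij i j)))⁻¹ *ᵥ s) :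
    pol z - pol zp =
      2 * δ * (ctr z ⬝ᵥ ((1 + lap W)⁻¹ *ᵥ vij i j)) * (vij i j ⬝ᵥ ctr z) /
          (1 + δ * (vij i j ⬝ᵥ ((1 + lap W)⁻¹ *ᵥ vij i j))) -
        δ ^ 2 * (vij i j ⬝ᵥ (((1 + lap W)⁻¹ * (1 + lap W)⁻¹) *ᵥ vij i j)) *
            (z i - z j) ^ 2 /
          (1 + δ * (vij i j ⬝ᵥ ((1 + lap W)⁻¹ *ᵥ vij i j))) ^ 2 := by
  classical
  set A : Matrix (Fin n) (Fin n) ℝ := 1 + lap W with hA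
  set v : Fin n → ℝ := vij i j with hv
  set V : Matrix (Fin n) (Fin n) ℝ := vecMulVec v v with hV
  -- positive definiteness
  have hWnn : ∀ a b, 0 ≤ W a b := fun a b => (hW a b).1
  have hApd : A.PosDef := posdef_one_add _ (lap_isSymm W hsymm) (lap_quad W hsymm hWnn)
  have hAdet : IsUnit A.det := A.isUnit_iff_isUnit_det.mp hApd.isUnit
  have hAAinv : A * A⁻¹ = 1 := Matrix.mul_nonsing_inv A hAdet
  have hAinvA : A⁻¹ * A = 1 := Matrix.nonsing_inv_mul A hAdet
  have hAsymm : Aᵀ = A := hApd.isHermitian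
  have hAinvsymm : (A⁻¹)ᵀ = A⁻¹ := by
    rw [Matrix.transpose_nonsing_inv, hAsymm]
  -- notation
  set u : Fin n → ℝ := A⁻¹ *ᵥ v with hu
  set β : ℝ := v ⬝ᵥ u with hβ
  have hβnn : 0 ≤ β := by
    have := hApd.inv.posSemidef.dotProduct_mulVec_nonneg v
    simpa [hβ, hu] using this
  set D : ℝ := 1 + δ * β with hD
  have hDpos : 0 < D := by positivity
  have hDne : D ≠ 0 := ne_of_gt hDpos
  -- Sherman–Morrison
  set γ : ℝ := δ / D with hγ
  set B : Matrix (Fin n) (Fin n) ℝ := A⁻¹ - γ • (A⁻¹ * V * A⁻¹) with hB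
  have hVAV : V * A⁻¹ * V = β • V := by
    rw [hV, vecMulVec_sandwich]
  have hprod : (A + δ • V) * B = 1 := by
    have h1 : A * (A⁻¹ * V * A⁻¹) = V * A⁻¹ := by
      rw [← Matrix.mul_assoc, ← Matrix.mul_assoc, hAAinv, Matrix.one_mul]
    have h2 : V * (A⁻¹ * V * A⁻¹) = β • (V * A⁻¹) := by
      calc V * (A⁻¹ * V * A⁻¹) = (V * A⁻¹ * V) * A⁻¹ := by
            rw [Matrix.mul_assoc, Matrix.mul_assoc, Matrix.mul_assoc]
        _ = β • (V * A⁻¹) := by rw [hVAV, Matrix.smul_mul]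
    have expand : (A + δ • V) * B
        = 1 - γ • (V * A⁻¹) + (δ • (V * A⁻¹) - (δ * γ * β) • (V * A⁻¹)) := by
      rw [hB]
      simp only [add_mul, mul_sub, Matrix.mul_smul, Matrix.smul_mul, h1, h2, hAAinv,
        smul_smul]
      module
    have hc : (δ : ℝ) - γ - δ * γ * β = 0 := by
      rw [hγ, hD]
      field_simp
      ring
    rw [expand]
    have : 1 - γ • (V * A⁻¹) + (δ • (V * A⁻¹) - (δ * γ * β) • (V * A⁻¹))
        = 1 + (δ - γ - δ * γ * β) • (V * A⁻¹) := by
      rw [sub_smul, sub_smul]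
      abel
    rw [this, hc, zero_smul, add_zero]
  have hBinv : (1 + (lap W + δ • V))⁻¹ = B := by
    have : (1 : Matrix (Fin n) (Fin n) ℝ) + (lap W + δ • V) = A + δ • V := by
      rw [hA, add_assoc]
    rw [this]
    exact Matrix.inv_eq_right_inv hprod
  -- expression for zp
  set c : ℝ := γ * (v ⬝ᵥ z) with hc
  have hzpz : zp = fun k => z k - c * u k := by
    funext k
    rw [hzp, hBinv, hB, Matrix.sub_mulVec, Matrix.smul_mulVec]
    have : (A⁻¹ * V * A⁻¹) *ᵥ s = (v ⬝ᵥ z) • u := by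
      rw [← Matrix.mulVec_mulVec, ← Matrix.mulVec_mulVec, ← hz, hV, vecMulVec_mulVec',
        Matrix.mulVec_smul]
    rw [this, ← hz]
    simp [smul_smul, hc, mul_comm]
  -- mean facts
  have hones : A *ᵥ (fun _ => (1:ℝ)) = fun _ => (1:ℝ) := by
    funext k
    rw [hA, Matrix.add_mulVec, Matrix.one_mulVec]
    have : lap W *ᵥ (fun _ => (1:ℝ)) = 0 := by
      funext a
      simp only [lap, Matrix.sub_mulVec, Pi.sub_apply, mulVec, dotProduct, Pi.zero_apply,
        mul_one]
      simp [Matrix.diagonal_apply, deg, Finset.sum_ite_eq]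
    rw [this]
    simp
  have hinvones : A⁻¹ *ᵥ (fun _ => (1:ℝ)) = fun _ => (1:ℝ) := by
    have := congrArg (fun w => A⁻¹ *ᵥ w) hones
    simpa [Matrix.mulVec_mulVec, hAinvA] using this.symm
  have hsumu : ∑ k, u k = 0 := by
    have h1 : (fun _ => (1:ℝ)) ⬝ᵥ u = ∑ k, u k := by simp [dotProduct]
    have h2 : (fun _ => (1:ℝ)) ⬝ᵥ u = v ⬝ᵥ (fun _ => (1:ℝ)) := by
      rw [hu, Matrix.dotProduct_mulVec, ← Matrix.mulVec_transpose, hAinvsymm, hinvones]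
      simp [dotProduct, mul_comm]
    rw [← h1, h2]
    simp [dotProduct, hv, sum_vij]
  have hsumv : ∑ k, v k = 0 := sum_vij i j
  -- dot product rewritings
  have hvz : v ⬝ᵥ z = z i - z j := dot_vij i j hij z
  have hvctr : v ⬝ᵥ ctr z = v ⬝ᵥ z := by
    simp only [dotProduct, ctr, mul_sub, Finset.sum_sub_distrib, ← Finset.sum_mul, hsumv]
    ring
  have huu : v ⬝ᵥ ((A⁻¹ * A⁻¹) *ᵥ v) = u ⬝ᵥ u := by
    rw [← Matrix.mulVec_mulVec, ← hu, Matrix.dotProduct_mulVec, ← Matrix.mulVec_transpose,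
      hAinvsymm, ← hu]
  -- polarization difference
  have hmeanzp : mean zp = mean z := by
    rw [hzpz, mean, mean]
    simp [Finset.sum_sub_distrib, ← Finset.mul_sum, hsumu]
  have hpol : pol z - pol zp = 2 * c * (ctr z ⬝ᵥ u) - c ^ 2 * (u ⬝ᵥ u) := by
    rw [pol, pol, hmeanzp, hzpz]
    rw [← Finset.sum_sub_distrib]
    have : ∀ k, (z k - mean z) ^ 2 - (z k - c * u k - mean z) ^ 2
        = 2 * c * ((z k - mean z) * u k) - c ^ 2 * (u k * u k) := by
      intro k; ring
    rw [Finset.sum_congr rfl fun k _ => this k]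
    simp only [dotProduct, ctr, Finset.sum_sub_distrib, Finset.mul_sum]
  -- final algebra
  rw [hpol, huu, hvctr]
  rw [← hvz, hc, hγ]
  field_simp
end
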